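/- If two Cantor CDFs with the same scale factor N agree at the points k/N for k = 1,...,N-1, then they are equal; i.e., {k/N : 1 ≤ k ≤ N-1} is a set of uniqueness for the family of CDFs of Cantor sets with scale factor N. -/

import Mathlib

open MeasureTheory Set
open scoped ENNReal

lemma cantor_null_Iio (μ : Measure ℝ) [IsProbabilityMeasure μ]
    (hsupp : μ (Set.Icc 0 1) = 1) : μ (Set.Iio (0:ℝ)) = 0 := by
  have hc : μ (Set.Icc (0:ℝ) 1)ᶜ = 0 := by
    rw [measure_compl measurableSet_Icc (measure_ne_top μ _), hsupp, measure_univ, tsub_self]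
  exact measure_mono_null (fun x hx => by simp [Set.mem_Icc]; intro h; linarith [Set.mem_Iio.mp hx]) hc

lemma cantor_atom_zero (N : ℕ) (hN : 3 ≤ N) (D : Finset ℕ) (hDcard : 2 ≤ D.card)
    (μ : Measure ℝ) [IsProbabilityMeasure μ]
    (hsupp : μ (Set.Icc 0 1) = 1)
    (hinv : μ = (D.card : ℝ≥0∞)⁻¹ • ∑ d ∈ D, μ.map (fun x : ℝ => (x + (d : ℝ)) / N)) :
    μ {(0:ℝ)} = 0 := by
  have hN0 : (0:ℝ) < N := by positivity
  have h0 : μ (Set.Iio (0:ℝ)) = 0 := cantor_null_Iio μ hsupp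
  have hmeas : ∀ d : ℕ, Measurable (fun x : ℝ => (x + (d:ℝ)) / N) :=
    fun d => ((continuous_id.add continuous_const).div_const _).measurable
  have heq : μ {(0:ℝ)} = (D.card : ℝ≥0∞)⁻¹ * (if 0 ∈ D then μ {(0:ℝ)} else 0) := by
    conv_lhs => rw [hinv]
    rw [Measure.smul_apply, smul_eq_mul, Measure.finset_sum_apply]
    congr 1
    have hterm : ∀ d ∈ D, (μ.map (fun x : ℝ => (x + (d:ℝ)) / N)) {(0:ℝ)}
        = if d = 0 then μ {(0:ℝ)} else 0 := by
      intro d _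
      rw [Measure.map_apply (hmeas d) (measurableSet_singleton 0)]
      have hpre : (fun x : ℝ => (x + (d:ℝ)) / N) ⁻¹' {(0:ℝ)} = {(-(d:ℝ))} := by
        ext x
        simp only [Set.mem_preimage, Set.mem_singleton_iff, div_eq_iff (ne_of_gt hN0), zero_mul]
        constructor <;> intro h <;> linarith
      rw [hpre]
      split_ifs with h
      · subst h; norm_num
      · apply measure_mono_null _ h0
        intro x hx
        simp only [Set.mem_singleton_iff] at hx
        subst hx
        simp only [Set.mem_Iio]
        have : (1:ℝ) ≤ (d:ℝ) := by exact_mod_cast Nat.one_le_iff_ne_zero.mpr h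
        linarith
    rw [Finset.sum_congr rfl hterm, Finset.sum_ite_eq' D 0 (fun _ => μ {(0:ℝ)})]
  split_ifs at heq with h
  · by_contra hne
    have h2 : (D.card : ℝ≥0∞)⁻¹ * μ {(0:ℝ)} < μ {(0:ℝ)} := by
      calc (D.card : ℝ≥0∞)⁻¹ * μ {(0:ℝ)} ≤ (2:ℝ≥0∞)⁻¹ * μ {(0:ℝ)} := by
            refine mul_le_mul_of_nonneg_right ?_ zero_le
            rw [ENNReal.inv_le_inv]
            exact_mod_cast hDcard
        _ = μ {(0:ℝ)} / 2 := by rw [mul_comm, div_eq_mul_inv]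
        _ < μ {(0:ℝ)} := ENNReal.half_lt_self hne (measure_ne_top μ _)
    rw [← heq] at h2
    exact lt_irrefl _ h2
  · simpa using heq

lemma cantor_step (N : ℕ) (hN : 3 ≤ N) (D : Finset ℕ) (hD : D ⊆ Finset.range N)
    (hDcard : 2 ≤ D.card)
    (μ : Measure ℝ) [IsProbabilityMeasure μ]
    (hsupp : μ (Set.Icc 0 1) = 1)
    (hinv : μ = (D.card : ℝ≥0∞)⁻¹ • ∑ d ∈ D, μ.map (fun x : ℝ => (x + (d : ℝ)) / N))
    (t : ℝ) (ht0 : 0 ≤ t) (ht1 : t ≤ 1) (k : ℕ) (hk : k < N) :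
    μ (Set.Icc 0 ((t + k) / N))
      = (D.card : ℝ≥0∞)⁻¹ * (((D.filter (· < k)).card : ℝ≥0∞)
          + if k ∈ D then μ (Set.Icc 0 t) else 0) := by
  have hN0 : (0:ℝ) < N := by positivity
  have h0 : μ (Set.Iio (0:ℝ)) = 0 := cantor_null_Iio μ hsupp
  have hatom : μ {(0:ℝ)} = 0 := cantor_atom_zero N hN D hDcard μ hsupp hinv
  have hIic : μ (Set.Iic (0:ℝ)) = 0 := by
    have hu : Set.Iic (0:ℝ) = Set.Iio 0 ∪ {0} := by
      ext x; simp [le_iff_lt_or_eq]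
    rw [hu]
    refine le_antisymm (le_trans (measure_union_le _ _) ?_) zero_le
    rw [h0, hatom, add_zero]
  have hmeas : ∀ d : ℕ, Measurable (fun x : ℝ => (x + (d:ℝ)) / N) :=
    fun d => ((continuous_id.add continuous_const).div_const _).measurable
  conv_lhs => rw [hinv]
  rw [Measure.smul_apply, smul_eq_mul, Measure.finset_sum_apply]
  congr 1
  have hpre : ∀ d : ℕ, (fun x : ℝ => (x + (d:ℝ)) / N) ⁻¹' Set.Icc 0 ((t + k) / N)
      = Set.Icc (-(d:ℝ)) (t + k - d) := by
    intro d
    ext x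
    simp only [Set.mem_preimage, Set.mem_Icc]
    constructor
    · rintro ⟨h1, h2⟩
      have e1 : (0:ℝ) ≤ x + d := by
        have := mul_le_mul_of_nonneg_right h1 hN0.le
        rwa [zero_mul, div_mul_cancel₀ _ (ne_of_gt hN0)] at this
      have e2 : x + (d:ℝ) ≤ t + k := by
        have := mul_le_mul_of_nonneg_right h2 hN0.le
        rwa [div_mul_cancel₀ _ (ne_of_gt hN0), div_mul_cancel₀ _ (ne_of_gt hN0)] at this
      exact ⟨by linarith, by linarith⟩
    · rintro ⟨h1, h2⟩
      refine ⟨div_nonneg (by linarith) hN0.le, ?_⟩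
      exact (div_le_div_iff_of_pos_right hN0).mpr (by linarith)
  have hterm : ∀ d ∈ D, (μ.map (fun x : ℝ => (x + (d:ℝ)) / N)) (Set.Icc 0 ((t + k) / N))
      = if d < k then 1 else if d = k then μ (Set.Icc 0 t) else 0 := by
    intro d _
    rw [Measure.map_apply (hmeas d) measurableSet_Icc, hpre d]
    rcases lt_trichotomy d k with h | h | h
    · rw [if_pos h]
      refine le_antisymm prob_le_one ?_
      calc (1:ℝ≥0∞) = μ (Set.Icc 0 1) := hsupp.symm
        _ ≤ μ (Set.Icc (-(d:ℝ)) (t + k - d)) := by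
            apply measure_mono
            apply Set.Icc_subset_Icc
            · simp
            · have : (d:ℝ) + 1 ≤ k := by exact_mod_cast h
              linarith
    · rw [if_neg (by omega), if_pos h]
      subst h
      have hrw : t + (d:ℝ) - d = t := by ring
      rw [hrw]
      refine le_antisymm ?_ (measure_mono (Set.Icc_subset_Icc (by simp) le_rfl))
      calc μ (Set.Icc (-(d:ℝ)) t) ≤ μ (Set.Icc 0 t ∪ Set.Iio 0) := by
            apply measure_mono
            intro x hx
            rcases le_or_gt 0 x with h0x | h0x
            · exact Or.inl ⟨h0x, hx.2⟩
            · exact Or.inr h0x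
        _ ≤ μ (Set.Icc 0 t) + μ (Set.Iio 0) := measure_union_le _ _
        _ = μ (Set.Icc 0 t) := by rw [h0, add_zero]
    · rw [if_neg (by omega), if_neg (by omega)]
      apply measure_mono_null _ hIic
      intro x hx
      have : (k:ℝ) + 1 ≤ d := by exact_mod_cast h
      simp only [Set.mem_Iic]
      linarith [hx.2]
  rw [Finset.sum_congr rfl hterm]
  rw [← Finset.sum_filter_add_sum_filter_not D (· < k)]
  congr 1
  · rw [Finset.sum_congr rfl (fun d hd => if_pos (Finset.mem_filter.mp hd).2)]
    simp
  · have hc : ∀ d ∈ D.filter (fun d => ¬ d < k),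
        (if d < k then (1:ℝ≥0∞) else if d = k then μ (Set.Icc 0 t) else 0)
          = if d = k then μ (Set.Icc 0 t) else 0 :=
      fun d hd => if_neg (Finset.mem_filter.mp hd).2
    rw [Finset.sum_congr rfl hc, Finset.sum_ite_eq' _ k (fun _ => μ (Set.Icc 0 t))]
    congr 1
    simp [Finset.mem_filter]

lemma cantor_step_real (N : ℕ) (hN : 3 ≤ N) (D : Finset ℕ) (hD : D ⊆ Finset.range N)
    (hDcard : 2 ≤ D.card)
    (μ : Measure ℝ) [IsProbabilityMeasure μ]
    (hsupp : μ (Set.Icc 0 1) = 1)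
    (hinv : μ = (D.card : ℝ≥0∞)⁻¹ • ∑ d ∈ D, μ.map (fun x : ℝ => (x + (d : ℝ)) / N))
    (t : ℝ) (ht0 : 0 ≤ t) (ht1 : t ≤ 1) (k : ℕ) (hk : k < N) :
    (μ (Set.Icc 0 ((t + k) / N))).toReal
      = (((D.filter (· < k)).card : ℝ)
          + if k ∈ D then (μ (Set.Icc 0 t)).toReal else 0) / D.card := by
  rw [cantor_step N hN D hD hDcard μ hsupp hinv t ht0 ht1 k hk]
  rw [ENNReal.toReal_mul, ENNReal.toReal_inv]
  rw [ENNReal.toReal_add (by simp) (by split_ifs <;> simp [measure_ne_top])]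
  rw [inv_mul_eq_div, ENNReal.toReal_natCast]
  split_ifs <;> simp

lemma cantor_point (N : ℕ) (hN : 3 ≤ N) (D : Finset ℕ) (hD : D ⊆ Finset.range N)
    (hDcard : 2 ≤ D.card)
    (μ : Measure ℝ) [IsProbabilityMeasure μ]
    (hsupp : μ (Set.Icc 0 1) = 1)
    (hinv : μ = (D.card : ℝ≥0∞)⁻¹ • ∑ d ∈ D, μ.map (fun x : ℝ => (x + (d : ℝ)) / N))
    (k : ℕ) (hk : k < N) :
    (μ (Set.Icc 0 ((k:ℝ) / N))).toReal = ((D.filter (· < k)).card : ℝ) / D.card := by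
  have h := cantor_step_real N hN D hD hDcard μ hsupp hinv 0 le_rfl zero_le_one k hk
  rw [zero_add] at h
  rw [h]
  congr 1
  rw [Set.Icc_self]
  rw [cantor_atom_zero N hN D hDcard μ hsupp hinv]
  simp

theorem cantor_cdf_uniqueness_from_samples
    (N : ℕ) (hN : 3 ≤ N)
    (D E : Finset ℕ) (hD : D ⊆ Finset.range N) (hE : E ⊆ Finset.range N)
    (hDcard : 2 ≤ D.card) (hDcard' : D.card ≤ N - 1)
    (hEcard : 2 ≤ E.card) (hEcard' : E.card ≤ N - 1)
    (μ ν : Measure ℝ) [IsProbabilityMeasure μ] [IsProbabilityMeasure ν]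
    (hμsupp : μ (Set.Icc 0 1) = 1)
    (hμinv : μ = (D.card : ℝ≥0∞)⁻¹ • ∑ d ∈ D, μ.map (fun x : ℝ => (x + (d : ℝ)) / N))
    (hνsupp : ν (Set.Icc 0 1) = 1)
    (hνinv : ν = (E.card : ℝ≥0∞)⁻¹ • ∑ d ∈ E, ν.map (fun x : ℝ => (x + (d : ℝ)) / N))
    (hsamples : ∀ k : ℕ, 1 ≤ k → k ≤ N - 1 →
      (μ (Set.Icc 0 ((k : ℝ) / N))).toReal = (ν (Set.Icc 0 ((k : ℝ) / N))).toReal) :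
    ∀ x : ℝ, (μ (Set.Icc 0 x)).toReal = (ν (Set.Icc 0 x)).toReal := by
  have hN0 : (0:ℝ) < N := by positivity
  have hDpos : (0:ℝ) < D.card := by exact_mod_cast Nat.lt_of_lt_of_le (by norm_num) hDcard
  have hEpos : (0:ℝ) < E.card := by exact_mod_cast Nat.lt_of_lt_of_le (by norm_num) hEcard
  -- r values agree for all k ≤ N
  have hr : ∀ k : ℕ, k ≤ N →
      ((D.filter (· < k)).card : ℝ) / D.card = ((E.filter (· < k)).card : ℝ) / E.card := by
    intro k hk
    rcases Nat.eq_zero_or_pos k with rfl | hk1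
    · simp
    rcases eq_or_lt_of_le hk with rfl | hkN
    · have h1 : D.filter (· < k) = D := Finset.filter_true_of_mem
        (fun d hd => Finset.mem_range.mp (hD hd))
      have h2 : E.filter (· < k) = E := Finset.filter_true_of_mem
        (fun d hd => Finset.mem_range.mp (hE hd))
      rw [h1, h2, div_self (ne_of_gt hDpos), div_self (ne_of_gt hEpos)]
    · rw [← cantor_point N hN D hD hDcard μ hμsupp hμinv k hkN,
        ← cantor_point N hN E hE hEcard ν hνsupp hνinv k hkN]
      exact hsamples k hk1 (by omega)
  -- card splitting
  have hsplit : ∀ (S : Finset ℕ) (k : ℕ),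
      ((S.filter (· < k + 1)).card : ℝ)
        = ((S.filter (· < k)).card : ℝ) + (if k ∈ S then 1 else 0) := by
    intro S k
    have hu : S.filter (· < k + 1) = S.filter (· < k) ∪ S.filter (· = k) := by
      rw [← Finset.filter_or]
      apply Finset.filter_congr
      intro d _
      constructor <;> intro h <;> omega
    have hdis : Disjoint (S.filter (· < k)) (S.filter (· = k)) := by
      rw [Finset.disjoint_left]
      intro a ha hb
      have h1 := (Finset.mem_filter.mp ha).2
      have h2 := (Finset.mem_filter.mp hb).2
      omega
    rw [hu, Finset.card_union_of_disjoint hdis, Finset.filter_eq' S k]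
    split_ifs <;> simp
  -- indicator equality
  have hkey : ∀ k : ℕ, k < N →
      (if k ∈ D then (1:ℝ) else 0) / D.card = (if k ∈ E then (1:ℝ) else 0) / E.card := by
    intro k hk
    have h1 := hr k (by omega)
    have h2 := hr (k + 1) (by omega)
    rw [hsplit D k, hsplit E k, add_div, add_div] at h2
    linarith
  have hDE : D = E := by
    ext d
    constructor
    · intro hd
      have hdN : d < N := Finset.mem_range.mp (hD hd)
      have h := hkey d hdN
      rw [if_pos hd] at h
      by_contra hde
      rw [if_neg hde] at h
      have : (0:ℝ) < 1 / D.card := div_pos one_pos hDpos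
      rw [zero_div] at h
      linarith
    · intro hd
      have hdN : d < N := Finset.mem_range.mp (hE hd)
      have h := hkey d hdN
      rw [if_pos hd] at h
      by_contra hde
      rw [if_neg hde] at h
      have : (0:ℝ) < 1 / E.card := div_pos one_pos hEpos
      rw [zero_div] at h
      linarith
  subst hDE
  -- contraction
  have hstepμ := cantor_step_real N hN D hD hDcard μ hμsupp hμinv
  have hstepν := cantor_step_real N hN D hD hDcard ν hνsupp hνinv
  have hbound : ∀ n : ℕ, ∀ x : ℝ, 0 ≤ x → x ≤ 1 →
      |(μ (Set.Icc 0 x)).toReal - (ν (Set.Icc 0 x)).toReal| ≤ (1/2 : ℝ) ^ n := by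
    intro n
    induction n with
    | zero =>
      intro x h0 h1
      have hμ1 : (μ (Set.Icc 0 x)).toReal ≤ 1 := by
        simpa using ENNReal.toReal_mono ENNReal.one_ne_top (prob_le_one (μ := μ) (s := Set.Icc 0 x))
      have hν1 : (ν (Set.Icc 0 x)).toReal ≤ 1 := by
        simpa using ENNReal.toReal_mono ENNReal.one_ne_top (prob_le_one (μ := ν) (s := Set.Icc 0 x))
      have hμ0 : 0 ≤ (μ (Set.Icc 0 x)).toReal := ENNReal.toReal_nonneg
      have hν0 : 0 ≤ (ν (Set.Icc 0 x)).toReal := ENNReal.toReal_nonneg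
      rw [pow_zero, abs_le]
      constructor <;> linarith
    | succ n ih =>
      intro x h0 h1
      obtain ⟨k, hkN, t, ht0, ht1, hx⟩ : ∃ k, k < N ∧ ∃ t, 0 ≤ t ∧ t ≤ 1 ∧ x = (t + k) / N := by
        rcases eq_or_lt_of_le h1 with h | h
        · refine ⟨N - 1, by omega, 1, by norm_num, le_rfl, ?_⟩
          have hc : ((N - 1 : ℕ) : ℝ) = (N:ℝ) - 1 := by
            push_cast [Nat.cast_sub (by omega : 1 ≤ N)]
            ring
          rw [hc, h]
          field_simp
          ring
        · refine ⟨⌊(N:ℝ) * x⌋₊, ?_, (N:ℝ) * x - ⌊(N:ℝ) * x⌋₊, ?_, ?_, ?_⟩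
          · have hNx0 : 0 ≤ (N:ℝ) * x := by positivity
            have : (N:ℝ) * x < N := by nlinarith
            exact_mod_cast (Nat.floor_lt hNx0).mpr (by exact_mod_cast this)
          · have hNx0 : 0 ≤ (N:ℝ) * x := by positivity
            linarith [Nat.floor_le hNx0]
          · linarith [Nat.lt_floor_add_one ((N:ℝ) * x)]
          · field_simp
            ring
      rw [hx, hstepμ t ht0 ht1 k hkN, hstepν t ht0 ht1 k hkN]
      have hd2 : (2:ℝ) ≤ D.card := by exact_mod_cast hDcard
      by_cases hkD : k ∈ D
      · simp only [if_pos hkD]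
        set a := (μ (Set.Icc 0 t)).toReal
        set b := (ν (Set.Icc 0 t)).toReal
        set c := ((D.filter (· < k)).card : ℝ)
        have heq : (c + a) / D.card - (c + b) / D.card = (a - b) / D.card := by
          ring
        rw [heq, abs_div, abs_of_pos hDpos]
        have habs : |a - b| ≤ (1/2 : ℝ) ^ n := ih t ht0 ht1
        have h1 : |a - b| / D.card ≤ |a - b| / 2 :=
          div_le_div_of_nonneg_left (abs_nonneg _) two_pos hd2
        have h2 : |a - b| / 2 ≤ (1/2 : ℝ) ^ n / 2 := by linarith
        calc |a - b| / (D.card : ℝ) ≤ (1/2 : ℝ) ^ n / 2 := le_trans h1 h2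
          _ = (1/2 : ℝ) ^ (n + 1) := by rw [pow_succ]; ring
      · simp only [if_neg hkD]
        simp only [add_zero, sub_self, abs_zero]
        positivity
  intro x
  rcases lt_or_ge x 0 with hx | hx
  · rw [Set.Icc_eq_empty (by linarith : ¬ (0:ℝ) ≤ x)]
    simp
  · rcases le_or_gt x 1 with hx1 | hx1
    · have h := fun n => hbound n x hx hx1
      have hle : |(μ (Set.Icc 0 x)).toReal - (ν (Set.Icc 0 x)).toReal| ≤ 0 := by
        apply ge_of_tendsto' (tendsto_pow_atTop_nhds_zero_of_lt_one (by norm_num) (by norm_num)) h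
      have := abs_nonneg ((μ (Set.Icc 0 x)).toReal - (ν (Set.Icc 0 x)).toReal)
      have h0 : |(μ (Set.Icc 0 x)).toReal - (ν (Set.Icc 0 x)).toReal| = 0 := le_antisymm hle this
      have := abs_eq_zero.mp h0
      linarith
    · have hμ1 : μ (Set.Icc 0 x) = 1 :=
        le_antisymm prob_le_one (hμsupp ▸ measure_mono (Set.Icc_subset_Icc le_rfl hx1.le))
      have hν1 : ν (Set.Icc 0 x) = 1 :=
        le_antisymm prob_le_one (hνsupp ▸ measure_mono (Set.Icc_subset_Icc le_rfl hx1.le))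
      rw [hμ1, hν1]
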